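/- In ℂ[H_0, H_1]/(H_0⁴(2H_0+H_1), H_1⁴(H_0+2H_1)), the element 9·H_0³H_1³(2H_0+H_1)(H_0+2H_1) — i.e. the volume class Vol_1 = 3²·H_0³H_1³·(2H_0+H_1)(H_0+2H_1) — is nonzero. -/
import Mathlib


open MvPolynomial

noncomputable def chowIdeal1 : Ideal (MvPolynomial (Fin 2) ℂ) :=
  Ideal.span {X 0 ^ 4 * (2 * X 0 + X 1), X 1 ^ 4 * (X 0 + 2 * X 1)}

/-- The exponent vector `(a, b)` as a `Fin 2 →₀ ℕ`. -/
noncomputable def ee (a b : ℕ) : Fin 2 →₀ ℕ := Finsupp.single 0 a + Finsupp.single 1 b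

lemma ee_apply0 (a b : ℕ) : ee a b 0 = a := by
  simp [ee, Finsupp.single_apply]

lemma ee_apply1 (a b : ℕ) : ee a b 1 = b := by
  simp [ee, Finsupp.single_apply]

lemma ee_eq {a b c d : ℕ} : (ee a b = ee c d) ↔ (a = c ∧ b = d) := by
  constructor
  · intro h
    exact ⟨by rw [← ee_apply0 a b, h, ee_apply0], by rw [← ee_apply1 a b, h, ee_apply1]⟩
  · rintro ⟨rfl, rfl⟩; rfl

lemma ee_le {a b c d : ℕ} : (ee a b ≤ ee c d) ↔ (a ≤ c ∧ b ≤ d) := by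
  constructor
  · intro h
    exact ⟨by simpa [ee_apply0] using h 0, by simpa [ee_apply1] using h 1⟩
  · rintro ⟨h1, h2⟩ i
    fin_cases i <;> simpa [ee_apply0, ee_apply1]

lemma ee_sub {a b c d : ℕ} : ee a b - ee c d = ee (a - c) (b - d) := by
  ext i
  fin_cases i <;> simp [Finsupp.tsub_apply, ee_apply0, ee_apply1]

lemma hg1 : (X 0 ^ 4 * (2 * X 0 + X 1) : MvPolynomial (Fin 2) ℂ)
    = monomial (ee 5 0) 2 + monomial (ee 4 1) 1 := by
  have h : (X 0 ^ 4 * (2 * X 0 + X 1) : MvPolynomial (Fin 2) ℂ)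
      = C 2 * X 0 ^ 5 + X 0 ^ 4 * X 1 ^ 1 := by
    rw [map_ofNat]; ring
  rw [h]
  simp [X, monomial_pow, monomial_mul, C_mul_monomial, ee, Finsupp.smul_single]

lemma hg2 : (X 1 ^ 4 * (X 0 + 2 * X 1) : MvPolynomial (Fin 2) ℂ)
    = monomial (ee 1 4) 1 + monomial (ee 0 5) 2 := by
  have h : (X 1 ^ 4 * (X 0 + 2 * X 1) : MvPolynomial (Fin 2) ℂ)
      = X 0 ^ 1 * X 1 ^ 4 + C 2 * X 1 ^ 5 := by
    rw [map_ofNat]; ring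
  rw [h]
  simp [X, monomial_pow, monomial_mul, C_mul_monomial, ee, Finsupp.smul_single]

lemma htgt : (9 * X 0 ^ 3 * X 1 ^ 3 * (2 * X 0 + X 1) * (X 0 + 2 * X 1) : MvPolynomial (Fin 2) ℂ)
    = monomial (ee 5 3) 18 + monomial (ee 4 4) 45 + monomial (ee 3 5) 18 := by
  have h : (9 * X 0 ^ 3 * X 1 ^ 3 * (2 * X 0 + X 1) * (X 0 + 2 * X 1) : MvPolynomial (Fin 2) ℂ)
      = C 18 * (X 0 ^ 5 * X 1 ^ 3) + C 45 * (X 0 ^ 4 * X 1 ^ 4) + C 18 * (X 0 ^ 3 * X 1 ^ 5) := by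
    rw [map_ofNat, map_ofNat]; ring
  rw [h]
  simp [X, monomial_pow, monomial_mul, C_mul_monomial, ee, Finsupp.smul_single]

/-- A linear functional on degree-8 coefficients that kills all multiples of the two
generators of `chowIdeal1` (only the degree-3 parts of the cofactors contribute). -/
noncomputable def LL (p : MvPolynomial (Fin 2) ℂ) : ℂ :=
    coeff (ee 0 8) p - 2 * coeff (ee 1 7) p + 4 * coeff (ee 2 6) p
  - 8 * coeff (ee 3 5) p + 16 * coeff (ee 4 4) p - 8 * coeff (ee 5 3) p
  + 4 * coeff (ee 6 2) p - 2 * coeff (ee 7 1) p + coeff (ee 8 0) p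

lemma LL_add (p q : MvPolynomial (Fin 2) ℂ) : LL (p + q) = LL p + LL q := by
  simp only [LL, coeff_add]; ring

lemma LL_g1 (q : MvPolynomial (Fin 2) ℂ) :
    LL (q * (X 0 ^ 4 * (2 * X 0 + X 1))) = 0 := by
  rw [hg1]
  simp only [LL, mul_add, coeff_add, coeff_mul_monomial', ee_le, ee_sub]
  norm_num
  ring

lemma LL_g2 (q : MvPolynomial (Fin 2) ℂ) :
    LL (q * (X 1 ^ 4 * (X 0 + 2 * X 1))) = 0 := by
  rw [hg2]
  simp only [LL, mul_add, coeff_add, coeff_mul_monomial', ee_le, ee_sub]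
  norm_num
  ring

lemma LL_tgt : LL (9 * X 0 ^ 3 * X 1 ^ 3 * (2 * X 0 + X 1) * (X 0 + 2 * X 1)) = 432 := by
  rw [htgt]
  simp only [LL, coeff_add, coeff_monomial, ee_eq]
  norm_num

theorem stmt16 :
    Ideal.Quotient.mk chowIdeal1
      (9 * X 0 ^ 3 * X 1 ^ 3 * (2 * X 0 + X 1) * (X 0 + 2 * X 1)) ≠ 0 := by
  intro h
  rw [Ideal.Quotient.eq_zero_iff_mem, chowIdeal1, Ideal.mem_span_pair] at h
  obtain ⟨a, b, hab⟩ := h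
  have := congrArg LL hab
  rw [LL_add, LL_g1, LL_g2, LL_tgt] at this
  norm_num at this
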